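/- Let T be a bounded linear operator on a Banach space X that is an (m,∞)-isometry. Then for all n ∈ ℕ and all x ∈ X, ‖Tⁿx‖ ≤ max{‖T^k x‖ : 0 ≤ k ≤ m-1}. In particular, T is power bounded: ‖Tⁿ‖ ≤ max{‖T^k‖ : 0 ≤ k ≤ m-1} for all n ∈ ℕ. -/

import Mathlib

/-- T is an (m,∞)-isometry: for every x, the maximum of the norms of T^k x over even
k in {0,...,m} equals the maximum over odd k in {0,...,m}. -/
def IsMInfIsometry {𝕜 X : Type*} [RCLike 𝕜] [NormedAddCommGroup X] [NormedSpace 𝕜 X]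
    (T : X →L[𝕜] X) (m : ℕ) : Prop :=
  ∀ x : X,
    (((Finset.range (m + 1)).filter fun k => Even k).sup fun k => ‖(T ^ k) x‖₊) =
    (((Finset.range (m + 1)).filter fun k => Odd k).sup fun k => ‖(T ^ k) x‖₊)

lemma key_step {𝕜 X : Type*} [RCLike 𝕜] [NormedAddCommGroup X] [NormedSpace 𝕜 X]
    (T : X →L[𝕜] X) (m : ℕ) (hT : IsMInfIsometry T m) (y : X) :
    ‖(T ^ m) y‖₊ ≤ (Finset.range m).sup fun k => ‖(T ^ k) y‖₊ := by
  rcases Nat.even_or_odd m with hme | hmo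
  · calc ‖(T ^ m) y‖₊
        ≤ ((Finset.range (m + 1)).filter fun k => Even k).sup fun k => ‖(T ^ k) y‖₊ :=
          Finset.le_sup (f := fun k => ‖(T ^ k) y‖₊)
            (by simp [Finset.mem_filter, Finset.mem_range, hme])
      _ = ((Finset.range (m + 1)).filter fun k => Odd k).sup fun k => ‖(T ^ k) y‖₊ := hT y
      _ ≤ (Finset.range m).sup fun k => ‖(T ^ k) y‖₊ := by
          refine Finset.sup_le fun k hk => ?_
          simp only [Finset.mem_filter, Finset.mem_range] at hk
          refine Finset.le_sup (f := fun k => ‖(T ^ k) y‖₊) (Finset.mem_range.2 ?_)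
          refine lt_of_le_of_ne (Nat.lt_succ_iff.1 hk.1) ?_
          rintro rfl
          exact (Nat.not_odd_iff_even.2 hme) hk.2
  · calc ‖(T ^ m) y‖₊
        ≤ ((Finset.range (m + 1)).filter fun k => Odd k).sup fun k => ‖(T ^ k) y‖₊ :=
          Finset.le_sup (f := fun k => ‖(T ^ k) y‖₊)
            (by simp [Finset.mem_filter, Finset.mem_range, hmo])
      _ = ((Finset.range (m + 1)).filter fun k => Even k).sup fun k => ‖(T ^ k) y‖₊ :=
          (hT y).symm
      _ ≤ (Finset.range m).sup fun k => ‖(T ^ k) y‖₊ := by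
          refine Finset.sup_le fun k hk => ?_
          simp only [Finset.mem_filter, Finset.mem_range] at hk
          refine Finset.le_sup (f := fun k => ‖(T ^ k) y‖₊) (Finset.mem_range.2 ?_)
          refine lt_of_le_of_ne (Nat.lt_succ_iff.1 hk.1) ?_
          rintro rfl
          exact (Nat.not_even_iff_odd.2 hmo) hk.2

theorem stmt_16 {𝕜 X : Type*} [RCLike 𝕜] [NormedAddCommGroup X] [NormedSpace 𝕜 X]
    [CompleteSpace X] (T : X →L[𝕜] X) (m : ℕ) (hm : 1 ≤ m) (hT : IsMInfIsometry T m) :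
    (∀ (n : ℕ) (x : X), ‖(T ^ n) x‖₊ ≤ (Finset.range m).sup fun k => ‖(T ^ k) x‖₊) ∧
    ∀ n : ℕ, ‖T ^ n‖₊ ≤ (Finset.range m).sup fun k => ‖T ^ k‖₊ := by
  have main : ∀ (n : ℕ) (x : X), ‖(T ^ n) x‖₊ ≤ (Finset.range m).sup fun k => ‖(T ^ k) x‖₊ := by
    intro n
    induction n using Nat.strong_induction_on with
    | _ n ih =>
      intro x
      by_cases hn : n < m
      · exact Finset.le_sup (f := fun k => ‖(T ^ k) x‖₊) (Finset.mem_range.2 hn)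
      · push_neg at hn
        have hsplit : n = (n - m) + m := (Nat.sub_add_cancel hn).symm
        have h1 : ‖(T ^ n) x‖₊ ≤ (Finset.range m).sup fun k => ‖(T ^ (n - m + k)) x‖₊ := by
          have := key_step T m hT ((T ^ (n - m)) x)
          calc ‖(T ^ n) x‖₊ = ‖(T ^ m) ((T ^ (n - m)) x)‖₊ := by
                rw [← ContinuousLinearMap.comp_apply, ← ContinuousLinearMap.mul_def,
                  ← pow_add, Nat.add_sub_cancel' hn]
            _ ≤ (Finset.range m).sup fun k => ‖(T ^ k) ((T ^ (n - m)) x)‖₊ := this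
            _ = (Finset.range m).sup fun k => ‖(T ^ (n - m + k)) x‖₊ := by
                refine Finset.sup_congr rfl fun k _ => ?_
                rw [add_comm, pow_add, ContinuousLinearMap.mul_apply]
        refine h1.trans (Finset.sup_le fun k hk => ?_)
        have hk' := Finset.mem_range.1 hk
        have hlt : n - m + k < n := by omega
        exact ih _ hlt x
  refine ⟨main, fun n => ?_⟩
  rw [ContinuousLinearMap.opNNNorm_le_iff]
  intro x
  calc ‖(T ^ n) x‖₊ ≤ (Finset.range m).sup fun k => ‖(T ^ k) x‖₊ := main n x
    _ ≤ ((Finset.range m).sup fun k => ‖T ^ k‖₊) * ‖x‖₊ := by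
        refine Finset.sup_le fun k hk => ?_
        calc ‖(T ^ k) x‖₊ ≤ ‖T ^ k‖₊ * ‖x‖₊ := (T ^ k).le_opNNNorm x
          _ ≤ _ := mul_le_mul_left (Finset.le_sup (f := fun k => ‖T ^ k‖₊) hk) _
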